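/- Let A be a set of letters, Γ ⊆ A a finite subset, and w ∈ Γ*. Let w₀ be the Γ-block compression of w (with fresh letters outside Γ), and for i = 1,…,k let wᵢ be the (Γℓⁱ,Γrⁱ)-pair compression of w_{i−1}, where for each i the sets Γℓⁱ and Γrⁱ form a partition of Γ and the fresh letters used lie outside Γ. Assume that every ordered pair (a,b) ∈ Γ × Γ with a ≠ b is covered by some partition, i.e., there is some i ∈ {1,…,k} with a ∈ Γℓⁱ and b ∈ Γrⁱ. Then 3·|w_k| ≤ 2·|w| + 1. -/

import Mathlib

/-- The Γ-block compression of a word: every maximal block `a^ℓ` with `a ∈ Γ`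
and `ℓ ≥ 2` is replaced by the single letter `d a ℓ`; all other letters are kept. -/
def BC {A : Type*} [DecidableEq A] (Γ : Finset A) (d : A → ℕ → A) : List A → List A
  | [] => []
  | a :: w =>
    (if a ∈ Γ ∧ 2 ≤ (w.takeWhile (· = a)).length + 1
      then [d a ((w.takeWhile (· = a)).length + 1)]
      else List.replicate ((w.takeWhile (· = a)).length + 1) a)
    ++ BC Γ d (w.dropWhile (· = a))
  termination_by w => w.length
  decreasing_by
    simp only [List.length_cons]
    exact Nat.lt_succ_of_le (List.dropWhile_sublist _).length_le
/-- The (Γℓ,Γr)-pair compression of a word: every occurrence of a two-letter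
factor `a b` with `a ∈ Gl` and `b ∈ Gr` is replaced by the single letter `c a b`,
proceeding from left to right. -/
def PC {A : Type*} [DecidableEq A] (Gl Gr : Finset A) (c : A → A → A) : List A → List A
  | [] => []
  | [a] => [a]
  | a :: b :: w =>
    if a ∈ Gl ∧ b ∈ Gr then c a b :: PC Gl Gr c w
    else a :: PC Gl Gr c (b :: w)

section Helpers

variable {A : Type*} [DecidableEq A]

def wgt (Γ : Finset A) (u : List A) : ℕ := (u.map fun a => if a ∈ Γ then 1 else 2).sum

@[simp] lemma wgt_nil (Γ : Finset A) : wgt Γ ([] : List A) = 0 := rfl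

@[simp] lemma wgt_cons (Γ : Finset A) (a : A) (u : List A) :
    wgt Γ (a :: u) = (if a ∈ Γ then 1 else 2) + wgt Γ u := rfl

lemma wgt_le (Γ : Finset A) (a : A) : (if a ∈ Γ then 1 else 2) ≤ 2 := by split <;> omega

lemma one_le_wgt (Γ : Finset A) (a : A) : 1 ≤ (if a ∈ Γ then 1 else 2) := by split <;> omega

/-- Counting lemma combined with strengthening for non-light head. -/
lemma count_aux (Γ : Finset A) : ∀ u : List A,
    (∀ a b : A, [a, b] <:+: u → ¬(a ∈ Γ ∧ b ∈ Γ)) →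
    3 * u.length ≤ 2 * wgt Γ u + 1 ∧
      ((∀ a, u.head? = some a → a ∉ Γ) → 3 * u.length ≤ 2 * wgt Γ u) := by
  intro u
  induction u with
  | nil => simp
  | cons a v ih =>
    intro h
    have hv := ih (fun x y hxy => h x y (hxy.trans (List.suffix_cons a v).isInfix))
    by_cases ha : a ∈ Γ
    · -- head of v is not in Γ
      have hhead : ∀ x, v.head? = some x → x ∉ Γ := by
        intro x hx hxΓ
        cases v with
        | nil => simp at hx
        | cons y t =>
          have hyx : y = x := by simpa using hx
          subst hyx
          exact h a y ⟨[], t, rfl⟩ ⟨ha, hxΓ⟩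
      have := hv.2 hhead
      constructor
      · simp [ha]; omega
      · intro hc; exact absurd ha (hc a rfl)
    · have := hv.1
      have hs : 3 * (a :: v).length ≤ 2 * wgt Γ (a :: v) := by simp [ha]; omega
      exact ⟨le_trans hs (by omega), fun _ => hs⟩

lemma PC_head (Γ Gl Gr : Finset A) (c : A → A → A)
    (hfresh : ∀ x ∈ Gl, ∀ y ∈ Gr, c x y ∉ Γ) :
    ∀ u : List A, ∀ h : A, (PC Gl Gr c u).head? = some h → h ∈ Γ → u.head? = some h := by
  intro u
  match u with
  | [] => simp [PC]
  | [a] => simp [PC]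
  | a :: b :: v =>
    intro h hh hΓ
    rw [PC] at hh
    split at hh
    · rename_i hab
      simp at hh
      exact absurd hΓ (hh ▸ hfresh a hab.1 b hab.2)
    · simp at hh ⊢
      exact hh

lemma PC_infix (Γ Gl Gr : Finset A) (c : A → A → A)
    (hfresh : ∀ x ∈ Gl, ∀ y ∈ Gr, c x y ∉ Γ) :
    ∀ u : List A, ∀ a b : A, a ∈ Γ → b ∈ Γ → [a, b] <:+: PC Gl Gr c u →
      [a, b] <:+: u ∧ ¬(a ∈ Gl ∧ b ∈ Gr) := by
  intro u
  induction u using PC.induct Gl Gr with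
  | case1 => intro a b _ _ hi; rw [PC] at hi; exact absurd hi.length_le (by simp)
  | case2 x => intro a b _ _ hi; rw [PC] at hi; exact absurd hi.length_le (by simp)
  | case3 x y v hxy ih =>
    intro a b haΓ hbΓ hi
    rw [PC, if_pos hxy] at hi
    rcases List.infix_cons_iff.1 hi with hp | hs
    · exfalso
      obtain ⟨t, ht⟩ := hp
      simp only [List.cons_append, List.nil_append, List.cons.injEq] at ht
      exact hfresh x hxy.1 y hxy.2 (ht.1 ▸ haΓ)
    · obtain ⟨h1, h2⟩ := ih a b haΓ hbΓ hs
      exact ⟨h1.trans ((List.suffix_cons y v).isInfix.trans (List.suffix_cons x (y :: v)).isInfix), h2⟩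
  | case4 x y v hxy ih =>
    intro a b haΓ hbΓ hi
    rw [PC, if_neg hxy] at hi
    rcases List.infix_cons_iff.1 hi with hp | hs
    · -- [a,b] <+: x :: PC (y::v) : a = x, b = head of PC (y::v)
      obtain ⟨t, ht⟩ := hp
      simp only [List.cons_append, List.nil_append, List.cons.injEq] at ht
      obtain ⟨hax, hbt⟩ := ht
      have hb' : (PC Gl Gr c (y :: v)).head? = some b := by rw [← hbt]; rfl
      have hy := PC_head Γ Gl Gr c hfresh (y :: v) b hb' hbΓ
      have hyb : y = b := by simpa using hy
      subst hax
      subst hyb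
      exact ⟨⟨[], v, rfl⟩, hxy⟩
    · obtain ⟨h1, h2⟩ := ih a b haΓ hbΓ hs
      exact ⟨h1.trans (List.suffix_cons x (y :: v)).isInfix, h2⟩

lemma wgt_PC (Γ Gl Gr : Finset A) (c : A → A → A)
    (hGl : Gl ⊆ Γ) (hGr : Gr ⊆ Γ) :
    ∀ u : List A, wgt Γ (PC Gl Gr c u) ≤ wgt Γ u := by
  intro u
  induction u using PC.induct Gl Gr with
  | case1 => simp [PC]
  | case2 x => simp [PC]
  | case3 x y v hxy ih =>
    rw [PC, if_pos hxy]
    simp only [wgt_cons, hGl hxy.1, hGr hxy.2, if_pos]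
    have := wgt_le Γ (c x y)
    omega
  | case4 x y v hxy ih =>
    rw [PC, if_neg hxy]
    simp only [wgt_cons] at ih ⊢
    omega

lemma wgt_append (Γ : Finset A) (u v : List A) : wgt Γ (u ++ v) = wgt Γ u + wgt Γ v := by
  simp [wgt]

lemma wgt_replicate (Γ : Finset A) (n : ℕ) (a : A) (ha : a ∈ Γ) :
    wgt Γ (List.replicate n a) = n := by
  induction n with
  | zero => rfl
  | succ m ih => simp [List.replicate_succ, ha, ih]; omega

lemma wgt_BC (Γ : Finset A) (d : A → ℕ → A) :
    ∀ u : List A, (∀ a ∈ u, a ∈ Γ) → wgt Γ (BC Γ d u) ≤ u.length := by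
  intro u
  induction u using BC.induct with
  | case1 => simp [BC]
  | case2 a w ih =>
    intro hw
    have haΓ : a ∈ Γ := hw a (by simp)
    have hlen : (w.takeWhile (· = a)).length + (w.dropWhile (· = a)).length = w.length := by
      conv_rhs => rw [← List.takeWhile_append_dropWhile (p := (· = a)) (l := w)]
      rw [List.length_append]
    have hr : wgt Γ (BC Γ d (w.dropWhile (· = a))) ≤ (w.dropWhile (· = a)).length :=
      ih (fun x hx => hw x (List.mem_cons_of_mem a ((List.dropWhile_sublist _).subset hx)))
    rw [BC, wgt_append]
    split
    · rename_i hcond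
      simp only [wgt_cons, wgt_nil]
      have := wgt_le Γ (d a ((w.takeWhile (· = a)).length + 1))
      simp only [List.length_cons]
      omega
    · rw [wgt_replicate Γ _ a haΓ]
      simp only [List.length_cons]
      omega

lemma BC_head (Γ : Finset A) (d : A → ℕ → A)
    (hd_fresh : ∀ a ∈ Γ, ∀ ℓ : ℕ, 2 ≤ ℓ → d a ℓ ∉ Γ) :
    ∀ u : List A, ∀ h : A, (BC Γ d u).head? = some h → h ∈ Γ → u.head? = some h := by
  intro u h
  match u with
  | [] => simp [BC]
  | a :: w =>
    intro hh hΓ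
    rw [BC] at hh
    split at hh
    · rename_i hcond
      simp only [List.cons_append, List.head?_cons, Option.some.injEq] at hh
      exact absurd hΓ (hh ▸ hd_fresh a hcond.1 _ hcond.2)
    · rw [List.replicate_succ] at hh
      simp only [List.cons_append, List.head?_cons, Option.some.injEq] at hh
      simp [hh]

lemma BC_infix (Γ : Finset A) (d : A → ℕ → A)
    (hd_fresh : ∀ a ∈ Γ, ∀ ℓ : ℕ, 2 ≤ ℓ → d a ℓ ∉ Γ) :
    ∀ u : List A, (∀ a ∈ u, a ∈ Γ) → ∀ a b : A, a ∈ Γ → b ∈ Γ →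
      [a, b] <:+: BC Γ d u → a ≠ b := by
  intro u
  induction u using BC.induct with
  | case1 => intro _ a b _ _ hi; rw [BC] at hi; exact absurd hi.length_le (by simp [BC])
  | case2 x w ih =>
    intro hw a b haΓ hbΓ hi
    have hxΓ : x ∈ Γ := hw x (by simp)
    have ih' := ih (fun z hz => hw z (List.mem_cons_of_mem x ((List.dropWhile_sublist _).subset hz)))
      a b haΓ hbΓ
    rw [BC] at hi
    split at hi
    · rename_i hcond
      simp only [List.cons_append, List.nil_append] at hi
      rcases List.infix_cons_iff.1 hi with hp | hs
      · exfalso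
        obtain ⟨t, ht⟩ := hp
        simp only [List.cons_append, List.nil_append, List.cons.injEq] at ht
        exact hd_fresh x hcond.1 _ hcond.2 (ht.1 ▸ haΓ)
      · exact ih' hs
    · rename_i hcond
      have ht0 : (w.takeWhile (· = x)).length = 0 := by
        by_contra hc
        exact hcond ⟨hxΓ, by omega⟩
      rw [ht0] at hi
      simp only [List.replicate_succ, List.replicate_zero, List.cons_append,
        List.nil_append] at hi
      rcases List.infix_cons_iff.1 hi with hp | hs
      · obtain ⟨t, ht⟩ := hp
        simp only [List.cons_append, List.nil_append, List.cons.injEq] at ht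
        obtain ⟨hax, hbt⟩ := ht
        have hb' : (BC Γ d (w.dropWhile (· = x))).head? = some b := by rw [← hbt]; rfl
        have hb2 := BC_head Γ d hd_fresh _ b hb' hbΓ
        have := List.head?_dropWhile_not (fun z => decide (z = x)) w
        rw [show (List.dropWhile (fun z => decide (z = x)) w) = w.dropWhile (· = x) from rfl,
          hb2] at this
        simp only [decide_eq_false_iff_not] at this
        subst hax
        exact fun hab => this (hab ▸ rfl)
      · exact ih' hs

end Helpers

/-- If `w ∈ Γ*`, `ws 0` is the Γ-block compression of `w`, and `ws i` is
obtained from `ws (i-1)` by the `(Gl i, Gr i)`-pair compression, where each `(Gl i, Gr i)`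
is a partition of `Γ` whose fresh letters lie outside `Γ`, and every ordered pair of
distinct letters of `Γ` is covered by some partition, then `3·|ws k| ≤ 2·|w| + 1`. -/
theorem stmt0 {A : Type*} [DecidableEq A] (Γ : Finset A) (d : A → ℕ → A)
    (hd_fresh : ∀ a ∈ Γ, ∀ ℓ : ℕ, 2 ≤ ℓ → d a ℓ ∉ Γ)
    (hd_inj : ∀ a ∈ Γ, ∀ a' ∈ Γ, ∀ ℓ ℓ' : ℕ, 2 ≤ ℓ → 2 ≤ ℓ' →
      d a ℓ = d a' ℓ' → a = a' ∧ ℓ = ℓ')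
    (k : ℕ) (Gl Gr : ℕ → Finset A) (c : ℕ → A → A → A)
    (hunion : ∀ i, 1 ≤ i → i ≤ k → Gl i ∪ Gr i = Γ)
    (hdisj : ∀ i, 1 ≤ i → i ≤ k → Disjoint (Gl i) (Gr i))
    (hc_fresh : ∀ i, 1 ≤ i → i ≤ k → ∀ a ∈ Gl i, ∀ b ∈ Gr i, c i a b ∉ Γ)
    (hc_inj : ∀ i, 1 ≤ i → i ≤ k → ∀ a ∈ Gl i, ∀ b ∈ Gr i, ∀ a' ∈ Gl i, ∀ b' ∈ Gr i,
      c i a b = c i a' b' → a = a' ∧ b = b')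
    (hcover : ∀ a ∈ Γ, ∀ b ∈ Γ, a ≠ b → ∃ i, 1 ≤ i ∧ i ≤ k ∧ a ∈ Gl i ∧ b ∈ Gr i)
    (w : List A) (hw : ∀ a ∈ w, a ∈ Γ)
    (ws : ℕ → List A)
    (h0 : ws 0 = BC Γ d w)
    (hstep : ∀ i, 1 ≤ i → i ≤ k → ws i = PC (Gl i) (Gr i) (c i) (ws (i - 1))) :
    3 * (ws k).length ≤ 2 * w.length + 1 := by
  have key : ∀ i, i ≤ k → wgt Γ (ws i) ≤ w.length ∧
      (∀ a b : A, a ∈ Γ → b ∈ Γ → [a, b] <:+: ws i → a ≠ b ∧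
        ∀ j, 1 ≤ j → j ≤ i → ¬(a ∈ Gl j ∧ b ∈ Gr j)) := by
    intro i
    induction i with
    | zero =>
      intro _
      rw [h0]
      refine ⟨wgt_BC Γ d w hw, ?_⟩
      intro a b ha hb hi
      exact ⟨BC_infix Γ d hd_fresh w hw a b ha hb hi, fun j hj1 hj0 => by omega⟩
    | succ n ih =>
      intro hnk
      have h1 : 1 ≤ n + 1 := by omega
      have hP := ih (by omega)
      rw [hstep (n + 1) h1 hnk]
      simp only [Nat.add_sub_cancel]
      have hGl : Gl (n + 1) ⊆ Γ := by
        rw [← hunion (n + 1) h1 hnk]; exact Finset.subset_union_left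
      have hGr : Gr (n + 1) ⊆ Γ := by
        rw [← hunion (n + 1) h1 hnk]; exact Finset.subset_union_right
      have hfresh := hc_fresh (n + 1) h1 hnk
      constructor
      · exact le_trans (wgt_PC Γ _ _ _ hGl hGr _) hP.1
      · intro a b ha hb hi
        obtain ⟨hi', hnot⟩ := PC_infix Γ _ _ _ hfresh _ a b ha hb hi
        obtain ⟨hne, hall⟩ := hP.2 a b ha hb hi'
        refine ⟨hne, fun j hj1 hjk => ?_⟩
        rcases Nat.lt_or_ge j (n + 1) with hj | hj
        · exact hall j hj1 (by omega)
        · have : j = n + 1 := by omega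
          exact this ▸ hnot
  obtain ⟨hW, hI⟩ := key k le_rfl
  have hno : ∀ a b : A, [a, b] <:+: ws k → ¬(a ∈ Γ ∧ b ∈ Γ) := by
    rintro a b hi ⟨ha, hb⟩
    obtain ⟨hne, hall⟩ := hI a b ha hb hi
    obtain ⟨i, hi1, hik, hmem⟩ := hcover a ha b hb hne
    exact hall i hi1 hik hmem
  have := (count_aux Γ (ws k) hno).1
  omega
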